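/- For unnormalized densities p₀, p₁ and a bridge function p* such that p*/p₀ is π₀-integrable and p*/p₁ is π₁-integrable, the ratio E_{π₀}[p*(X)/p₀(X)] / E_{π₁}[p*(X)/p₁(X)] equals Z₁/Z₀, provided E_{π₁}[p*(X)/p₁(X)] > 0. -/

import Mathlib

open MeasureTheory ENNReal

lemma bridge_key {X : Type*} [MeasurableSpace X] (μ : Measure X)
    (p ps : X → ℝ≥0∞) (hp : Measurable p) (hps : Measurable ps)
    (Z : ℝ≥0∞) (hZ : Z = ∫⁻ x, p x ∂μ) (hZpos : 0 < Z) (hZfin : Z < ∞)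
    (habs : ∀ x, p x = 0 → ps x = 0) :
    (∫⁻ x, ps x / p x ∂(μ.withDensity fun x => p x / Z)) = (∫⁻ x, ps x ∂μ) / Z := by
  have hmeas : Measurable fun x => p x / Z := hp.div_const Z
  rw [lintegral_withDensity_eq_lintegral_mul μ hmeas (g := fun x => ps x / p x) (hps.div hp)]
  have hfin : ∀ᵐ x ∂μ, p x ≠ ∞ := by
    have := ae_lt_top hp (hZ ▸ hZfin).ne
    filter_upwards [this] with x hx using hx.ne
  have : ∀ᵐ x ∂μ, (fun x => ((fun x => p x / Z) * fun x => ps x / p x) x) x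
      = ps x / Z := by
    filter_upwards [hfin] with x hx
    simp only [Pi.mul_apply]
    rcases eq_or_ne (p x) 0 with h0 | h0
    · simp [h0, habs x h0]
    · rw [div_eq_mul_inv, div_eq_mul_inv, div_eq_mul_inv]
      rw [mul_comm (p x) Z⁻¹, mul_assoc, ← mul_assoc (p x), mul_comm (p x),
        mul_assoc, ENNReal.mul_inv_cancel h0 hx, mul_one, mul_comm]
  rw [lintegral_congr_ae this]
  simp only [div_eq_mul_inv]
  rw [lintegral_mul_const' _ _ (by simp [hZpos.ne'] : Z⁻¹ ≠ ∞)]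

theorem bridge_sampling_identity {X : Type*} [MeasurableSpace X] (μ : Measure X) [SigmaFinite μ]
    (p₀ p₁ ps : X → ℝ≥0∞) (hp₀ : Measurable p₀) (hp₁ : Measurable p₁) (hps : Measurable ps)
    (Z₀ Z₁ Zs : ℝ≥0∞) (hZ₀ : Z₀ = ∫⁻ x, p₀ x ∂μ) (hZ₁ : Z₁ = ∫⁻ x, p₁ x ∂μ)
    (hZs : Zs = ∫⁻ x, ps x ∂μ)
    (hZ₀pos : 0 < Z₀) (hZ₀fin : Z₀ < ∞) (hZ₁pos : 0 < Z₁) (hZ₁fin : Z₁ < ∞) (hZsfin : Zs < ∞)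
    (habs₀ : ∀ x, p₀ x = 0 → ps x = 0) (habs₁ : ∀ x, p₁ x = 0 → ps x = 0)
    (hBpos : 0 < ∫⁻ x, ps x / p₁ x ∂(μ.withDensity fun x => p₁ x / Z₁)) :
    (∫⁻ x, ps x / p₀ x ∂(μ.withDensity fun x => p₀ x / Z₀)) /
      (∫⁻ x, ps x / p₁ x ∂(μ.withDensity fun x => p₁ x / Z₁)) = Z₁ / Z₀ := by
  rw [bridge_key μ p₀ ps hp₀ hps Z₀ hZ₀ hZ₀pos hZ₀fin habs₀,
    bridge_key μ p₁ ps hp₁ hps Z₁ hZ₁ hZ₁pos hZ₁fin habs₁, ← hZs]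
  have hZspos : Zs ≠ 0 := by
    intro h
    rw [bridge_key μ p₁ ps hp₁ hps Z₁ hZ₁ hZ₁pos hZ₁fin habs₁, ← hZs, h] at hBpos
    simp at hBpos
  rw [ENNReal.div_eq_div_iff hZ₀pos.ne' hZ₀fin.ne (ENNReal.div_ne_zero.mpr ⟨hZspos, hZ₁fin.ne⟩)
    (ENNReal.div_lt_top hZsfin.ne hZ₁pos.ne').ne]
  rw [ENNReal.mul_div_cancel hZ₀pos.ne' hZ₀fin.ne,
    ENNReal.div_mul_cancel hZ₁pos.ne' hZ₁fin.ne]
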